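/- There is a canonical bijection L(n₁,...,n_k;n) × C_{[n₁]} × ... × C_{[n_k]} ≅ L^{cyc}(n₁,...,n_k;n), obtained by joining and composing, where L^{cyc}(n₁,...,n_k;n) is the set of morphisms x : [n₁]∗...∗[n_k] → [n] in ΔΣ₊ all of whose components xᵢ : [nᵢ] → [n] lie in ΔC. -/

import Mathlib

/-- A morphism of `ΔΣ₊` with source `α` (here `α = [n₁] ∗ ⋯ ∗ [n_k]`) and target `[n]`:
a set map `α → {0,…,n}` together with a total ordering of each fiber, encoded by a
relation `r` which relates only elements of the same fiber, is reflexive, total on each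
fiber, antisymmetric and transitive. -/
structure FiberOrderedMap (α : Type) (n : ℕ) where
  toFun : α → Fin (n+1)
  r : α → α → Prop
  mem_fiber : ∀ a b, r a b → toFun a = toFun b
  refl : ∀ a, r a a
  total : ∀ a b, toFun a = toFun b → r a b ∨ r b a
  antisymm : ∀ a b, r a b → r b a → a = b
  trans : ∀ a b c, r a b → r b c → r a c

/-- The `i`-th component of `x : [n₁] ∗ ⋯ ∗ [n_k] → [n]` lies in `Δ`: the restriction of
`x` to `[nᵢ]` is monotone and its fibers carry the natural order. -/
def IsDeltaComponent {k n : ℕ} {ns : Fin k → ℕ}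
    (x : FiberOrderedMap (Σ i : Fin k, Fin (ns i + 1)) n) (i : Fin k) : Prop :=
  Monotone (fun a : Fin (ns i + 1) => x.toFun ⟨i, a⟩) ∧
    ∀ a b : Fin (ns i + 1),
      x.r ⟨i, a⟩ ⟨i, b⟩ ↔ (x.toFun ⟨i, a⟩ = x.toFun ⟨i, b⟩ ∧ a ≤ b)

/-- The `i`-th component of `x` lies in the cyclic category `ΔC`: it factors as a cyclic
permutation (a power of the standard cycle) followed by a monotone map with naturally
ordered fibers. -/
def IsCyclicComponent {k n : ℕ} {ns : Fin k → ℕ}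
    (x : FiberOrderedMap (Σ i : Fin k, Fin (ns i + 1)) n) (i : Fin k) : Prop :=
  ∃ s : ℕ,
    Monotone (fun a : Fin (ns i + 1) => x.toFun ⟨i, ((finRotate (ns i + 1) ^ s)⁻¹ a)⟩) ∧
    ∀ a b : Fin (ns i + 1),
      x.r ⟨i, a⟩ ⟨i, b⟩ ↔ (x.toFun ⟨i, a⟩ = x.toFun ⟨i, b⟩ ∧
        (finRotate (ns i + 1) ^ s) a ≤ (finRotate (ns i + 1) ^ s) b)

namespace CLPB

open Fin.NatCast Fin.CommRing

theorem fom_ext {α : Type} {n : ℕ} {x y : FiberOrderedMap α n}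
    (h1 : x.toFun = y.toFun) (h2 : x.r = y.r) : x = y := by
  cases x; cases y; cases h1; cases h2; rfl

variable {k n : ℕ} {ns : Fin k → ℕ}

def comp (x : FiberOrderedMap (Σ i : Fin k, Fin (ns i + 1)) n)
    (g : ∀ i, Equiv.Perm (Fin (ns i + 1))) :
    FiberOrderedMap (Σ i : Fin k, Fin (ns i + 1)) n where
  toFun v := x.toFun ⟨v.1, g v.1 v.2⟩
  r v w := x.r ⟨v.1, g v.1 v.2⟩ ⟨w.1, g w.1 w.2⟩
  mem_fiber v w h := x.mem_fiber _ _ h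
  refl v := x.refl _
  total v w h := x.total _ _ h
  antisymm v w h1 h2 := by
    have h := x.antisymm _ _ h1 h2
    obtain ⟨v1, v2⟩ := v
    obtain ⟨w1, w2⟩ := w
    obtain ⟨hi, hh⟩ := Sigma.mk.inj_iff.1 h
    subst hi
    have := (g v1).injective (eq_of_heq hh)
    subst this
    rfl
  trans v w u h1 h2 := x.trans _ _ _ h1 h2

theorem finRotate_pow_apply (N c : ℕ) (a : Fin (N+1)) :
    ((finRotate (N+1)) ^ c) a = a + (c : Fin (N+1)) := by
  induction c with
  | zero => simp
  | succ c ih =>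
    rw [pow_succ', Equiv.Perm.mul_apply, finRotate_succ_apply, ih]
    push_cast
    ring

theorem rot_unique {N n : ℕ} (f : Fin (N+1) → Fin (n+1)) (R : Fin (N+1) → Fin (N+1) → Prop)
    (s t : ℕ)
    (hms : Monotone fun a => f (((finRotate (N+1) ^ s)⁻¹ : Equiv.Perm _) a))
    (hrs : ∀ a b, R a b ↔ (f a = f b ∧ ((finRotate (N+1))^s) a ≤ ((finRotate (N+1))^s) b))
    (hmt : Monotone fun a => f (((finRotate (N+1) ^ t)⁻¹ : Equiv.Perm _) a))
    (hrt : ∀ a b, R a b ↔ (f a = f b ∧ ((finRotate (N+1))^t) a ≤ ((finRotate (N+1))^t) b)) :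
    (finRotate (N+1))^s = (finRotate (N+1))^t := by
  set ρ := finRotate (N+1) with hρ
  have hpow : ∀ (c : ℕ) (a : Fin (N+1)), (ρ^c) a = a + (c : Fin (N+1)) :=
    finRotate_pow_apply N
  have hinv : ∀ (c : ℕ) (a : Fin (N+1)), ((ρ^c)⁻¹ : Equiv.Perm _) a = a - (c : Fin (N+1)) := by
    intro c a
    apply (ρ^c).injective
    rw [Equiv.Perm.inv_def, Equiv.apply_symm_apply, hpow]
    ring
  have hext : (s : Fin (N+1)) = (t : Fin (N+1)) → ρ^s = ρ^t := by
    intro h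
    ext a
    rw [hpow, hpow, h]
  set d : Fin (N+1) := (s : Fin (N+1)) - (t : Fin (N+1)) with hd
  by_cases hd0 : d = 0
  · exact hext (sub_eq_zero.1 hd0)
  set m : Fin (N+1) → Fin (n+1) := fun a => f (((ρ^s)⁻¹ : Equiv.Perm _) a) with hm
  have hms' : Monotone m := hms
  have hmt2 : Monotone fun a => m (a + d) := by
    have : (fun a => m (a + d)) = fun a => f (((ρ^t)⁻¹ : Equiv.Perm _) a) := by
      funext a
      simp only [hm, hinv, hd]
      ring_nf
    rw [this]; exact hmt
  have key : m (-1) ≤ m 0 := by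
    have h1 : (-d - 1 : Fin (N+1)) ≤ -d := le_of_lt (Fin.sub_one_lt_iff.2 (by
      simp only [Fin.pos_iff_ne_zero, ne_eq, neg_eq_zero]; exact hd0))
    have h2 := hmt2 h1
    have e1 : (-d - 1 + d : Fin (N+1)) = -1 := by ring
    have e2 : (-d + d : Fin (N+1)) = 0 := by ring
    simpa only [e1, e2] using h2
  have hconst : ∀ a : Fin (N+1), m a = m 0 := by
    intro a
    have h1 : m a ≤ m (-1) := by
      apply hms'
      rw [Fin.le_def, Fin.coe_neg_one]
      omega
    have h2 : m 0 ≤ m a := hms' (Fin.zero_le a)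
    exact le_antisymm (h1.trans key) h2
  have hfconst : ∀ a b : Fin (N+1), f a = f b := by
    intro a b
    have ha : f a = m ((ρ^s) a) := by
      simp only [hm, Equiv.Perm.inv_def, Equiv.symm_apply_apply]
    have hb : f b = m ((ρ^s) b) := by
      simp only [hm, Equiv.Perm.inv_def, Equiv.symm_apply_apply]
    rw [ha, hb, hconst ((ρ^s) a), hconst ((ρ^s) b)]
  set θ : Fin (N+1) → Fin (N+1) := fun a => (ρ^t) (((ρ^s)⁻¹ : Equiv.Perm _) a) with hθ
  have hmono : Monotone θ := by
    intro u v huv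
    have h1 : R (((ρ^s)⁻¹ : Equiv.Perm _) u) (((ρ^s)⁻¹ : Equiv.Perm _) v) := by
      rw [hrs]
      exact ⟨hfconst _ _, by simpa using huv⟩
    have h2 := (hrt _ _).1 h1
    exact h2.2
  have hsm : StrictMono θ := by
    apply hmono.strictMono_of_injective
    intro u v huv
    exact (ρ^s).symm.injective ((ρ^t).injective huv)
  have hid : θ = id := by
    haveI : WellFoundedLT (Fin (N+1)) := inferInstance
    refine (hsm.range_inj strictMono_id).1 ?_
    have hsurj : Function.Surjective θ := fun b => ⟨(ρ^s) (((ρ^t)⁻¹ : Equiv.Perm _) b), by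
      simp [hθ]⟩
    rw [Set.range_eq_univ.2 hsurj, Set.range_id]
  ext a
  have := congrFun hid ((ρ^s) a)
  simp only [hθ, Equiv.Perm.inv_def, Equiv.symm_apply_apply, id_eq] at this
  rw [← this]

/-- key data lemma: if `x` has delta `i`-component and `g i = ρ^s` then `comp x g` has the
cyclic-component data for exponent `s` at `i`. -/
theorem comp_cyclic_data (x : FiberOrderedMap (Σ i : Fin k, Fin (ns i + 1)) n)
    (g : ∀ i, Equiv.Perm (Fin (ns i + 1))) (i : Fin k) (hx : IsDeltaComponent x i)
    (s : ℕ) (hs : finRotate (ns i + 1) ^ s = g i) :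
    Monotone (fun a : Fin (ns i + 1) =>
        (comp x g).toFun ⟨i, ((finRotate (ns i + 1) ^ s)⁻¹ a)⟩) ∧
    ∀ a b : Fin (ns i + 1),
      (comp x g).r ⟨i, a⟩ ⟨i, b⟩ ↔ ((comp x g).toFun ⟨i, a⟩ = (comp x g).toFun ⟨i, b⟩ ∧
        (finRotate (ns i + 1) ^ s) a ≤ (finRotate (ns i + 1) ^ s) b) := by
  constructor
  · have : (fun a : Fin (ns i + 1) =>
        (comp x g).toFun ⟨i, ((finRotate (ns i + 1) ^ s)⁻¹ a)⟩)
        = fun a : Fin (ns i + 1) => x.toFun ⟨i, a⟩ := by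
      funext a
      show x.toFun ⟨i, g i (((finRotate (ns i + 1) ^ s)⁻¹ : Equiv.Perm _) a)⟩ = _
      rw [← hs, Equiv.Perm.inv_def, Equiv.apply_symm_apply]
    rw [this]
    exact hx.1
  · intro a b
    rw [show (comp x g).r ⟨i, a⟩ ⟨i, b⟩ = x.r ⟨i, g i a⟩ ⟨i, g i b⟩ from rfl,
      show (comp x g).toFun ⟨i, a⟩ = x.toFun ⟨i, g i a⟩ from rfl,
      show (comp x g).toFun ⟨i, b⟩ = x.toFun ⟨i, g i b⟩ from rfl,
      hx.2, ← hs]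

end CLPB

/-- There is a canonical bijection
`L(n₁,…,n_k;n) × C_{[n₁]} × ⋯ × C_{[n_k]} ≅ L^{cyc}(n₁,…,n_k;n)` obtained by joining and
composing: here `L` (resp. `L^{cyc}`) is the set of morphisms `[n₁] ∗ ⋯ ∗ [n_k] → [n]`
in `ΔΣ₊` all of whose components lie in `Δ` (resp. in `ΔC`), the group `C_{[nᵢ]}` of
cyclic automorphisms of `[nᵢ]` is the cyclic subgroup generated by `finRotate (nᵢ+1)`,
and the bijection sends `(x, g₁,…,g_k)` to the composite `x ∘ (g₁ ∗ ⋯ ∗ g_k)`. -/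
theorem cyclic_lattice_paths_bijection (k n : ℕ) (ns : Fin k → ℕ) :
    ∃ e : ({ x : FiberOrderedMap (Σ i : Fin k, Fin (ns i + 1)) n //
              ∀ i : Fin k, IsDeltaComponent x i }
           × (∀ i : Fin k, { g : Equiv.Perm (Fin (ns i + 1)) //
                g ∈ Subgroup.zpowers (finRotate (ns i + 1)) }))
          ≃ { x : FiberOrderedMap (Σ i : Fin k, Fin (ns i + 1)) n //
                ∀ i : Fin k, IsCyclicComponent x i },
      ∀ x gs,
        ((e (x, gs)).val.toFun = fun v : Σ i : Fin k, Fin (ns i + 1) =>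
            x.val.toFun ⟨v.1, (gs v.1).val v.2⟩) ∧
        (∀ v w : Σ i : Fin k, Fin (ns i + 1),
          (e (x, gs)).val.r v w ↔
            x.val.r ⟨v.1, (gs v.1).val v.2⟩ ⟨w.1, (gs w.1).val w.2⟩) := by
  classical
  have hpowrep : ∀ (i : Fin k) (g : Equiv.Perm (Fin (ns i + 1))),
      g ∈ Subgroup.zpowers (finRotate (ns i + 1)) →
      ∃ s : ℕ, finRotate (ns i + 1) ^ s = g := by
    intro i g hg
    have := mem_powers_iff_mem_zpowers.2 hg
    exact Submonoid.mem_powers_iff _ _ |>.1 this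
  let F : ({ x : FiberOrderedMap (Σ i : Fin k, Fin (ns i + 1)) n //
              ∀ i : Fin k, IsDeltaComponent x i }
           × (∀ i : Fin k, { g : Equiv.Perm (Fin (ns i + 1)) //
                g ∈ Subgroup.zpowers (finRotate (ns i + 1)) })) →
      { x : FiberOrderedMap (Σ i : Fin k, Fin (ns i + 1)) n //
                ∀ i : Fin k, IsCyclicComponent x i } := fun p =>
    ⟨CLPB.comp p.1.val (fun i => (p.2 i).val), by
      intro i
      obtain ⟨s, hs⟩ := hpowrep i _ (p.2 i).2
      exact ⟨s, CLPB.comp_cyclic_data p.1.val _ i (p.1.2 i) s hs⟩⟩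
  have hinj : Function.Injective F := by
    rintro ⟨⟨x, hx⟩, g⟩ ⟨⟨x', hx'⟩, g'⟩ h
    have hcomp : CLPB.comp x (fun i => (g i).val) = CLPB.comp x' (fun i => (g' i).val) :=
      congrArg Subtype.val h
    have hgg : ∀ i, (g i).val = (g' i).val := by
      intro i
      obtain ⟨s, hs⟩ := hpowrep i _ (g i).2
      obtain ⟨t, ht⟩ := hpowrep i _ (g' i).2
      rw [← hs, ← ht]
      have d1 := CLPB.comp_cyclic_data x (fun i => (g i).val) i (hx i) s hs
      have d2 := CLPB.comp_cyclic_data x' (fun i => (g' i).val) i (hx' i) t ht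
      rw [← hcomp] at d2
      exact CLPB.rot_unique
        (fun a => (CLPB.comp x (fun i => (g i).val)).toFun ⟨i, a⟩)
        (fun a b => (CLPB.comp x (fun i => (g i).val)).r ⟨i, a⟩ ⟨i, b⟩)
        s t d1.1 d1.2 d2.1 d2.2
    have hxx : x = x' := by
      apply CLPB.fom_ext
      · funext v
        have h1 := congrFun (congrArg FiberOrderedMap.toFun hcomp)
          ⟨v.1, ((g v.1).val)⁻¹ v.2⟩
        have h2 : (CLPB.comp x (fun i => (g i).val)).toFun ⟨v.1, ((g v.1).val)⁻¹ v.2⟩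
            = x.toFun v := by
          show x.toFun ⟨v.1, (g v.1).val (((g v.1).val)⁻¹ v.2)⟩ = x.toFun v
          rw [Equiv.Perm.inv_def, Equiv.apply_symm_apply]
        have h3 : (CLPB.comp x' (fun i => (g' i).val)).toFun ⟨v.1, ((g v.1).val)⁻¹ v.2⟩
            = x'.toFun v := by
          show x'.toFun ⟨v.1, (g' v.1).val (((g v.1).val)⁻¹ v.2)⟩ = x'.toFun v
          rw [← hgg v.1, Equiv.Perm.inv_def, Equiv.apply_symm_apply]
        rw [← h2, ← h3, h1]
      · funext v w
        have h1 := congrFun (congrFun (congrArg FiberOrderedMap.r hcomp)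
          ⟨v.1, ((g v.1).val)⁻¹ v.2⟩) ⟨w.1, ((g w.1).val)⁻¹ w.2⟩
        have h2 : (CLPB.comp x (fun i => (g i).val)).r ⟨v.1, ((g v.1).val)⁻¹ v.2⟩
            ⟨w.1, ((g w.1).val)⁻¹ w.2⟩ = x.r v w := by
          show x.r ⟨v.1, (g v.1).val (((g v.1).val)⁻¹ v.2)⟩
              ⟨w.1, (g w.1).val (((g w.1).val)⁻¹ w.2)⟩ = x.r v w
          rw [Equiv.Perm.inv_def, Equiv.apply_symm_apply, Equiv.Perm.inv_def, Equiv.apply_symm_apply]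
        have h3 : (CLPB.comp x' (fun i => (g' i).val)).r ⟨v.1, ((g v.1).val)⁻¹ v.2⟩
            ⟨w.1, ((g w.1).val)⁻¹ w.2⟩ = x'.r v w := by
          show x'.r ⟨v.1, (g' v.1).val (((g v.1).val)⁻¹ v.2)⟩
              ⟨w.1, (g' w.1).val (((g w.1).val)⁻¹ w.2)⟩ = x'.r v w
          rw [← hgg v.1, ← hgg w.1, Equiv.Perm.inv_def, Equiv.apply_symm_apply, Equiv.Perm.inv_def, Equiv.apply_symm_apply]
        rw [← h2, ← h3, h1]
    refine Prod.ext (Subtype.ext hxx) (funext fun i => Subtype.ext (hgg i))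
  have hsurj : Function.Surjective F := by
    rintro ⟨y, hy⟩
    have hy' := fun i => hy i
    choose s hs1 hs2 using hy'
    set g : ∀ i : Fin k, Equiv.Perm (Fin (ns i + 1)) :=
      fun i => finRotate (ns i + 1) ^ (s i) with hgdef
    have hdelta : ∀ i, IsDeltaComponent (CLPB.comp y (fun i => (g i)⁻¹)) i := by
      intro i
      constructor
      · exact hs1 i
      · intro a b
        show y.r ⟨i, (g i)⁻¹ a⟩ ⟨i, (g i)⁻¹ b⟩ ↔ _
        rw [hs2 i ((g i)⁻¹ a) ((g i)⁻¹ b)]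
        constructor
        · rintro ⟨h1, h2⟩
          refine ⟨h1, ?_⟩
          simpa [hgdef] using h2
        · rintro ⟨h1, h2⟩
          refine ⟨h1, ?_⟩
          simpa [hgdef] using h2
    refine ⟨⟨⟨CLPB.comp y (fun i => (g i)⁻¹), hdelta⟩,
      fun i => ⟨g i, Subgroup.npow_mem_zpowers _ _⟩⟩, ?_⟩
    apply Subtype.ext
    apply CLPB.fom_ext
    · funext v
      show y.toFun ⟨v.1, (g v.1)⁻¹ (g v.1 v.2)⟩ = y.toFun v
      rw [Equiv.Perm.inv_def, Equiv.symm_apply_apply]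
    · funext v w
      show y.r ⟨v.1, (g v.1)⁻¹ (g v.1 v.2)⟩ ⟨w.1, (g w.1)⁻¹ (g w.1 w.2)⟩ = y.r v w
      rw [Equiv.Perm.inv_def, Equiv.symm_apply_apply, Equiv.Perm.inv_def, Equiv.symm_apply_apply]
  exact ⟨Equiv.ofBijective F ⟨hinj, hsurj⟩, fun x gs => ⟨rfl, fun v w => Iff.rfl⟩⟩
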